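/- If a centrosymmetric nonnegative matrix C has Perron eigenvalue λ₁, then there exists a nonnegative eigenvector x of C for λ₁ satisfying Jx = x (a symmetric Perron eigenvector). -/

import Mathlib

open Matrix Polynomial
open Filter
open scoped ENNReal NNReal Topology

/-- The n×n exchange (counteridentity) matrix. -/
def Jmat (n : ℕ) : Matrix (Fin n) (Fin n) ℝ :=
  Matrix.of fun i j => if (i : ℕ) + (j : ℕ) = n - 1 then 1 else 0

lemma Jmat_mul_Jmat (n : ℕ) : Jmat n * Jmat n = 1 := by
  ext i k
  have hi : (i:ℕ) < n := i.2
  have hk : (k:ℕ) < n := k.2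
  rw [Matrix.mul_apply]
  rw [Finset.sum_eq_single (⟨n-1-(i:ℕ), by omega⟩ : Fin n)]
  · simp only [Jmat, Matrix.of_apply, Matrix.one_apply]
    have e1 : (i:ℕ) + (n-1-(i:ℕ)) = n - 1 := by omega
    rw [if_pos e1, one_mul]
    by_cases h : (n-1-(i:ℕ)) + (k:ℕ) = n - 1
    · rw [if_pos h, if_pos (Fin.ext (by omega : (i:ℕ) = (k:ℕ)))]
    · rw [if_neg h, if_neg (fun hik => h (by cases hik; omega))]
  · intro j _ hj
    simp only [Jmat, Matrix.of_apply]
    rw [if_neg, zero_mul]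
    intro hcon
    have hj2 : (j:ℕ) < n := j.2
    have hval : (j:ℕ) = n - 1 - (i:ℕ) := by omega
    exact hj (Fin.ext hval)
  · intro h
    exact absurd (Finset.mem_univ _) h

section NormStuff

attribute [local instance] Matrix.linftyOpNormedRing Matrix.linftyOpNormedAlgebra

noncomputable instance mcomplete (m n : Type*) [Fintype m] [Fintype n] :
    CompleteSpace (Matrix m n ℂ) :=
  inferInstanceAs (CompleteSpace (m → n → ℂ))

lemma entry_abs_le {m : Type*} [Fintype m] [DecidableEq m] (A : Matrix m m ℂ) (i j : m) :
    ‖A i j‖ ≤ ‖A‖ := by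
  have h1 : ‖A i j‖₊ ≤ ∑ j', ‖A i j'‖₊ :=
    Finset.single_le_sum (f := fun j' => ‖A i j'‖₊) (fun j' _ => by positivity) (Finset.mem_univ j)
  have h2 : (∑ j', ‖A i j'‖₊) ≤ ‖A‖₊ := by
    rw [Matrix.linfty_opNNNorm_def]
    exact Finset.le_sup (f := fun i => ∑ j', ‖A i j'‖₊) (Finset.mem_univ i)
  have h3 := h1.trans h2
  calc ‖A i j‖ = ‖A i j‖ := rfl
    _ ≤ ‖A‖ := by exact_mod_cast h3

lemma pow_entry_bound (n : ℕ) (M : Matrix (Fin n) (Fin n) ℝ) (lam1 : ℝ) (hlam : 0 ≤ lam1)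
    (hper : ∀ μ ∈ spectrum ℂ (M.map Complex.ofReal), ‖μ‖ ≤ lam1)
    (t' : ℝ) (h : lam1 < t') :
    ∀ᶠ k in atTop, ∀ i j, |(M ^ k) i j| ≤ t' ^ k := by
  set M' := M.map Complex.ofReal with hM'
  have ht' : 0 < t' := hlam.trans_lt h
  have hsr : spectralRadius ℂ M' ≤ ENNReal.ofReal lam1 := by
    rw [spectralRadius]
    refine iSup₂_le fun μ hμ => ?_
    have h0 : ‖μ‖ ≤ lam1 := hper μ hμ
    calc (‖μ‖₊ : ℝ≥0∞) = ENNReal.ofReal ‖μ‖ := (ofReal_norm μ).symm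
      _ ≤ ENNReal.ofReal lam1 := ENNReal.ofReal_le_ofReal h0
  have hG := spectrum.pow_nnnorm_pow_one_div_tendsto_nhds_spectralRadius M'
  have hlt : spectralRadius ℂ M' < ENNReal.ofReal t' :=
    hsr.trans_lt ((ENNReal.ofReal_lt_ofReal_iff ht').mpr h)
  have hev : ∀ᶠ k : ℕ in atTop, (‖M' ^ k‖₊ : ℝ≥0∞) ^ (1/(k:ℝ)) < ENNReal.ofReal t' :=
    hG.eventually_lt_const hlt
  filter_upwards [hev, eventually_ge_atTop 1] with k hk hk1 i j
  have hk0 : (k : ℝ) ≠ 0 := by positivity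
  have h2 : (‖M' ^ k‖₊ : ℝ≥0∞) ≤ ENNReal.ofReal (t' ^ k) := by
    have h4 := ENNReal.rpow_le_rpow hk.le (by positivity : (0:ℝ) ≤ (k:ℝ))
    rw [← ENNReal.rpow_mul, one_div, inv_mul_cancel₀ hk0, ENNReal.rpow_one,
      ENNReal.ofReal_rpow_of_pos ht', Real.rpow_natCast] at h4
    exact h4
  have h3 : ‖M' ^ k‖ ≤ t' ^ k := by
    rw [← enorm_eq_nnnorm, ← ofReal_norm] at h2
    exact (ENNReal.ofReal_le_ofReal_iff (by positivity)).mp h2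
  have hmap : M' ^ k = (M ^ k).map Complex.ofReal := by
    rw [hM']
    have he : M.map Complex.ofReal = Complex.ofRealHom.mapMatrix M := rfl
    rw [he, ← map_pow]; rfl
  have h5 := entry_abs_le (M' ^ k) i j
  rw [hmap] at h5
  simpa [Matrix.map_apply, Complex.norm_real] using h5.trans (hmap ▸ h3)

/-- Construction of an approximate resolvent vector `x = (t - M)⁻¹ y`. -/
lemma approx_vec (n : ℕ) (M : Matrix (Fin n) (Fin n) ℝ) (lam1 : ℝ) (hlam : 0 ≤ lam1)
    (hper : ∀ μ ∈ spectrum ℂ (M.map Complex.ofReal), ‖μ‖ ≤ lam1)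
    (y : Fin n → ℝ)
    (hMk : ∀ k : ℕ, ∀ i j, 0 ≤ (M ^ k) i j)
    (hynn : ∀ i, 0 ≤ y i)
    (hkey : ∀ (k : ℕ) i, lam1 ^ k * y i ≤ ((M ^ k).mulVec y) i)
    (t : ℝ) (ht : lam1 < t) :
    ∃ x : Fin n → ℝ, (∀ i, 0 ≤ x i) ∧ M.mulVec x = t • x - y ∧
      ∀ i, y i / (t - lam1) ≤ x i := by
  have ht0 : 0 < t := hlam.trans_lt ht
  set t' : ℝ := (lam1 + t)/2 with ht'def
  have ht'1 : lam1 < t' := by rw [ht'def]; linarith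
  have ht'2 : t' < t := by rw [ht'def]; linarith
  have ht'0 : 0 < t' := hlam.trans_lt ht'1
  set f : ℕ → (Fin n → ℝ) := fun k => (t ^ (k+1))⁻¹ • (M ^ k).mulVec y with hfdef
  set C : ℝ := (n * ‖y‖) / t with hCdef
  have hC0 : 0 ≤ C := by positivity
  have hfb : ∀ᶠ k in atTop, ∀ i, |f k i| ≤ C * (t'/t)^k := by
    filter_upwards [pow_entry_bound n M lam1 hlam hper t' ht'1] with k hk i
    have h1 : |((M ^ k).mulVec y) i| ≤ n * (t' ^ k * ‖y‖) := by
      rw [Matrix.mulVec, dotProduct]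
      calc |∑ j, (M ^ k) i j * y j| ≤ ∑ j, |(M ^ k) i j * y j| := Finset.abs_sum_le_sum_abs _ _
        _ ≤ ∑ _j : Fin n, t' ^ k * ‖y‖ := by
            refine Finset.sum_le_sum fun j _ => ?_
            rw [abs_mul]
            exact mul_le_mul (hk i j) (norm_le_pi_norm y j) (abs_nonneg _)
              (by positivity)
        _ = n * (t' ^ k * ‖y‖) := by simp [mul_comm]
    have : |f k i| = (t ^ (k+1))⁻¹ * |((M ^ k).mulVec y) i| := by
      rw [hfdef]; simp [abs_mul, abs_of_nonneg (by positivity : (0:ℝ) ≤ (t ^ (k+1))⁻¹)]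
    rw [this]
    calc (t ^ (k+1))⁻¹ * |((M ^ k).mulVec y) i| ≤ (t ^ (k+1))⁻¹ * (n * (t' ^ k * ‖y‖)) := by
          exact mul_le_mul_of_nonneg_left h1 (by positivity)
      _ = C * (t'/t)^k := by
          clear_value t'; rw [hCdef, div_pow, pow_succ, mul_inv]; ring
  have hgeo : Summable (fun k : ℕ => C * (t'/t)^k) :=
    (summable_geometric_of_lt_one (by positivity) ((div_lt_one ht0).mpr ht'2)).mul_left C
  have hsum : Summable f := by
    refine Summable.of_norm_bounded_eventually_nat hgeo ?_
    filter_upwards [hfb] with k hk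
    exact pi_norm_le_iff_of_nonneg (by positivity : (0:ℝ) ≤ C * (t'/t)^k) |>.mpr fun i => hk i
  set x : Fin n → ℝ := ∑' k, f k with hxdef
  have hcoord : ∀ i, HasSum (fun k => f k i) (x i) := fun i => Pi.hasSum.mp hsum.hasSum i
  have hfnn : ∀ k i, 0 ≤ f k i := by
    intro k i
    rw [hfdef]
    simp only [Pi.smul_apply, smul_eq_mul, Matrix.mulVec, dotProduct]
    refine mul_nonneg (by positivity) ?_
    exact Finset.sum_nonneg fun j _ => mul_nonneg (hMk k i j) (hynn j)
  refine ⟨x, fun i => (hcoord i).nonneg (hfnn · i), ?_, ?_⟩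
  · -- M x = t x - y
    haveI : FiniteDimensional ℝ (Fin n → ℝ) := by infer_instance
    set T : (Fin n → ℝ) →L[ℝ] (Fin n → ℝ) :=
      LinearMap.toContinuousLinearMap (Matrix.mulVecLin M) with hTdef
    have hT : ∀ w, T w = M.mulVec w := fun w => rfl
    have h1 : M.mulVec x = ∑' k, M.mulVec (f k) := by
      rw [← hT]
      rw [hxdef, T.map_tsum hsum]
      simp only [hT]
    have h2 : ∀ k, M.mulVec (f k) = (t ^ (k+1))⁻¹ • (M ^ (k+1)).mulVec y := by
      intro k
      rw [hfdef]
      simp only [Matrix.mulVec_smul]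
      rw [Matrix.mulVec_mulVec, ← pow_succ']
    set g : ℕ → (Fin n → ℝ) := fun k => (t ^ k)⁻¹ • (M ^ k).mulVec y with hgdef
    have hgf : ∀ k, g k = t • f k := by
      intro k
      rw [hgdef, hfdef]
      simp only [smul_smul]
      congr 1
      rw [pow_succ]
      field_simp
    have hgsum : Summable g := by
      have he : g = fun k => t • f k := funext hgf
      rw [he]
      exact hsum.const_smul t
    have hg0 : g 0 = y := by
      rw [hgdef]; simp
    have hgs : ∀ k, g (k+1) = M.mulVec (f k) := by
      intro k
      rw [h2, hgdef]
    have h3 : t • x = y + M.mulVec x := by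
      calc t • x = ∑' k, t • f k := (Summable.tsum_const_smul t hsum).symm
        _ = ∑' k, g k := by simp_rw [hgf]
        _ = g 0 + ∑' k, g (k+1) := hgsum.tsum_eq_zero_add
        _ = y + ∑' k, M.mulVec (f k) := by rw [hg0]; simp_rw [hgs]
        _ = y + M.mulVec x := by rw [← h1]
    rw [h3]; abel
  · -- lower bound
    intro i
    have hterm : ∀ k : ℕ, (y i / t) * (lam1/t)^k ≤ f k i := by
      intro k
      have h1 := hkey k i
      have h2 : (y i / t) * (lam1/t)^k = (t ^ (k+1))⁻¹ * (lam1 ^ k * y i) := by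
        rw [div_pow]; field_simp [pow_succ]; ring
      rw [h2, hfdef]
      simp only [Pi.smul_apply, smul_eq_mul]
      exact mul_le_mul_of_nonneg_left h1 (by positivity)
    have hgs : Summable (fun k : ℕ => (y i / t) * (lam1/t)^k) :=
      (summable_geometric_of_lt_one (by positivity) ((div_lt_one ht0).mpr ht)).mul_left _
    have h4 : ∑' k : ℕ, (y i / t) * (lam1/t)^k ≤ x i := by
      calc ∑' k : ℕ, (y i / t) * (lam1/t)^k ≤ ∑' k, f k i :=
            Summable.tsum_le_tsum hterm hgs (hcoord i).summable
        _ = x i := (hcoord i).tsum_eq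
    have h5 : ∑' k : ℕ, (y i / t) * (lam1/t)^k = y i / (t - lam1) := by
      have hne : t - lam1 ≠ 0 := ne_of_gt (by linarith)
      have h6 : (1:ℝ) - lam1 / t = (t - lam1) / t := by field_simp
      rw [tsum_mul_left, tsum_geometric_of_lt_one (by positivity) ((div_lt_one ht0).mpr ht), h6,
        inv_div, div_mul_div_comm, mul_comm t (t - lam1),
        mul_div_mul_right _ _ (ne_of_gt ht0)]
    rwa [h5] at h4
end NormStuff

theorem symmetric_perron_eigenvector (n : ℕ) (M : Matrix (Fin n) (Fin n) ℝ)
    (hc : Jmat n * M * Jmat n = M) (hnn : ∀ i j, 0 ≤ M i j) (lam1 : ℝ)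
    (heig : ∃ v : Fin n → ℝ, v ≠ 0 ∧ M.mulVec v = lam1 • v)
    (hper : ∀ μ ∈ spectrum ℂ (M.map Complex.ofReal), ‖μ‖ ≤ lam1) :
    ∃ x : Fin n → ℝ, x ≠ 0 ∧ (∀ i, 0 ≤ x i) ∧ M.mulVec x = lam1 • x ∧
      (Jmat n).mulVec x = x := by
  classical
  obtain ⟨v, hv0, hv⟩ := heig
  have hJJ : Jmat n * Jmat n = 1 := Jmat_mul_Jmat n
  suffices h : ∃ x : Fin n → ℝ, x ≠ 0 ∧ (∀ i, 0 ≤ x i) ∧ M.mulVec x = lam1 • x by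
    obtain ⟨x0, hne, hnn0, heg⟩ := h
    have hJnn : ∀ i j, 0 ≤ Jmat n i j := by
      intro i j
      simp only [Jmat, Matrix.of_apply]
      split <;> norm_num
    have hJx0nn : ∀ i, 0 ≤ (Jmat n).mulVec x0 i := by
      intro i
      simp only [Matrix.mulVec, dotProduct]
      exact Finset.sum_nonneg fun j _ => mul_nonneg (hJnn i j) (hnn0 j)
    have hcomm : M * Jmat n = Jmat n * M := by
      calc M * Jmat n = (Jmat n * M * Jmat n) * Jmat n := by rw [hc]
        _ = (Jmat n * M) * (Jmat n * Jmat n) := by rw [Matrix.mul_assoc]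
        _ = Jmat n * M := by rw [hJJ, Matrix.mul_one]
    refine ⟨x0 + (Jmat n).mulVec x0, ?_, ?_, ?_, ?_⟩
    · obtain ⟨i, hi'⟩ := Function.ne_iff.mp hne
      have hi : x0 i ≠ 0 := by simpa using hi'
      have hpos : 0 < x0 i := (hnn0 i).lt_of_ne (Ne.symm hi)
      intro hcon
      have h1 := congrFun hcon i
      simp only [Pi.add_apply, Pi.zero_apply] at h1
      have h2 := hJx0nn i
      linarith
    · intro i; exact add_nonneg (hnn0 i) (hJx0nn i)
    · rw [Matrix.mulVec_add, heg, Matrix.mulVec_mulVec, hcomm, ← Matrix.mulVec_mulVec, heg,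
        Matrix.mulVec_smul, smul_add]
    · rw [Matrix.mulVec_add, Matrix.mulVec_mulVec, hJJ, Matrix.one_mulVec, add_comm]
  -- main construction
  obtain ⟨i0, hi0'⟩ := Function.ne_iff.mp hv0
  have hi0 : v i0 ≠ 0 := by simpa using hi0'
  -- lam1 is an eigenvalue over ℂ
  have hspec : (lam1 : ℂ) ∈ spectrum ℂ (M.map Complex.ofReal) := by
    rw [spectrum.mem_iff]
    intro hunit
    have hinj := Matrix.mulVec_injective_iff_isUnit.mpr hunit
    set v' : Fin n → ℂ := fun i => (v i : ℂ) with hv'def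
    have hv'0 : v' ≠ 0 := by
      intro hcon
      apply hv0
      funext i
      have h1 := congrFun hcon i
      simpa [hv'def, Complex.ofReal_eq_zero] using h1
    have hmv : (algebraMap ℂ (Matrix (Fin n) (Fin n) ℂ) lam1 - M.map Complex.ofReal).mulVec v'
        = 0 := by
      funext i
      have h1 : (algebraMap ℂ (Matrix (Fin n) (Fin n) ℂ) (lam1:ℂ)).mulVec v'
          = (lam1:ℂ) • v' := by
        rw [Algebra.algebraMap_eq_smul_one, Matrix.smul_mulVec, Matrix.one_mulVec]
      have h2 : (M.map Complex.ofReal).mulVec v' i = ((M.mulVec v) i : ℂ) := by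
        simp only [Matrix.mulVec, dotProduct, Matrix.map_apply, hv'def]
        norm_cast
      rw [Matrix.sub_mulVec, Pi.sub_apply, h2, hv, congrFun h1 i]
      simp only [Pi.smul_apply, smul_eq_mul, hv'def, Pi.zero_apply]
      push_cast
      ring_nf
    have h3 : (algebraMap ℂ (Matrix (Fin n) (Fin n) ℂ) lam1 - M.map Complex.ofReal).mulVec v'
        = (algebraMap ℂ (Matrix (Fin n) (Fin n) ℂ) lam1 - M.map Complex.ofReal).mulVec 0 := by
      rw [hmv, Matrix.mulVec_zero]
    exact hv'0 (hinj h3)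
  have hlam : 0 ≤ lam1 := by
    have habs := hper _ hspec
    rw [Complex.norm_real, Real.norm_eq_abs] at habs
    exact (abs_nonneg lam1).trans habs
  -- entries of powers are nonnegative
  have hMk : ∀ k : ℕ, ∀ i j, 0 ≤ (M ^ k) i j := by
    intro k
    induction k with
    | zero =>
      intro i j
      rw [pow_zero]
      by_cases h : i = j <;> simp [Matrix.one_apply, h]
    | succ k ih =>
      intro i j
      rw [pow_succ, Matrix.mul_apply]
      exact Finset.sum_nonneg fun l _ => mul_nonneg (ih i l) (hnn l j)
  have hpowv : ∀ k : ℕ, (M ^ k).mulVec v = (lam1 ^ k) • v := by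
    intro k
    induction k with
    | zero => simp [Matrix.one_mulVec]
    | succ k ih =>
      rw [pow_succ', ← Matrix.mulVec_mulVec, ih, Matrix.mulVec_smul, hv, smul_smul,
        ← pow_succ]
  set y : Fin n → ℝ := fun i => |v i| with hydef
  have hkey : ∀ (k : ℕ) i, lam1 ^ k * y i ≤ ((M ^ k).mulVec y) i := by
    intro k i
    have h1 : ((M ^ k).mulVec v) i = lam1 ^ k * v i := by rw [hpowv]; simp
    have h2 : |((M ^ k).mulVec v) i| ≤ ((M ^ k).mulVec y) i := by
      simp only [Matrix.mulVec, dotProduct, hydef]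
      calc |∑ j, (M ^ k) i j * v j| ≤ ∑ j, |(M ^ k) i j * v j| := Finset.abs_sum_le_sum_abs _ _
        _ = ∑ j, (M ^ k) i j * |v j| := by
            refine Finset.sum_congr rfl fun j _ => ?_
            rw [abs_mul, abs_of_nonneg (hMk k i j)]
    calc lam1 ^ k * y i = |lam1 ^ k * v i| := by
          rw [hydef, abs_mul, abs_of_nonneg (pow_nonneg hlam k)]
      _ = |((M ^ k).mulVec v) i| := by rw [h1]
      _ ≤ _ := h2
  set t : ℕ → ℝ := fun m => lam1 + 1/((m:ℝ)+1) with htdef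
  have htlt : ∀ m, lam1 < t m := by
    intro m
    have h1 : (0:ℝ) < 1/((m:ℝ)+1) := by positivity
    rw [htdef]; dsimp only; linarith
  have hx := fun m => approx_vec n M lam1 hlam hper y hMk (fun i => abs_nonneg _) hkey
    (t m) (htlt m)
  choose x hxnn hxeq hxlb using hx
  have hd : 0 < y i0 := abs_pos.mpr hi0
  have hclb : ∀ m : ℕ, y i0 * ((m:ℝ)+1) ≤ ‖x m‖ := by
    intro m
    have h1 := hxlb m i0
    have h2 : t m - lam1 = 1/((m:ℝ)+1) := by rw [htdef]; ring
    have h3 : y i0 / (1/((m:ℝ)+1)) = y i0 * ((m:ℝ)+1) := by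
      field_simp
    rw [h2, h3] at h1
    calc y i0 * ((m:ℝ)+1) ≤ x m i0 := h1
      _ ≤ |x m i0| := le_abs_self _
      _ ≤ ‖x m‖ := by exact norm_le_pi_norm (x m) i0
  have hc0 : ∀ m, 0 < ‖x m‖ := by
    intro m
    refine lt_of_lt_of_le ?_ (hclb m)
    positivity
  set u : ℕ → (Fin n → ℝ) := fun m => ‖x m‖⁻¹ • x m with hudef
  have husp : ∀ m, u m ∈ Metric.sphere (0 : Fin n → ℝ) 1 := by
    intro m
    rw [mem_sphere_zero_iff_norm, hudef]
    dsimp only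
    rw [norm_smul, norm_inv, norm_norm, inv_mul_cancel₀ (hc0 m).ne']
  obtain ⟨x0, hx0mem, φ, hφ, hconv⟩ :=
    (isCompact_sphere (0 : Fin n → ℝ) 1).tendsto_subseq husp
  have hres : Tendsto (fun m => ‖x m‖⁻¹ • y) atTop (𝓝 (0 : Fin n → ℝ)) := by
    have hg : Tendsto (fun m : ℕ => (‖y‖ / y i0) * (1/((m:ℝ)+1))) atTop (𝓝 0) := by
      have h5 := tendsto_one_div_add_atTop_nhds_zero_nat (𝕜 := ℝ)
      have h6 := h5.const_mul (‖y‖ / y i0)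
      simpa using h6
    refine squeeze_zero_norm (fun m => ?_) hg
    rw [norm_smul, norm_inv, norm_norm]
    have h4 : ‖x m‖⁻¹ ≤ (y i0 * ((m:ℝ)+1))⁻¹ :=
      inv_anti₀ (by positivity) (hclb m)
    calc ‖x m‖⁻¹ * ‖y‖ ≤ (y i0 * ((m:ℝ)+1))⁻¹ * ‖y‖ :=
          mul_le_mul_of_nonneg_right h4 (norm_nonneg y)
      _ = (‖y‖ / y i0) * (1/((m:ℝ)+1)) := by
          field_simp
  have hMcont : Continuous fun w : Fin n → ℝ => M.mulVec w :=
    LinearMap.continuous_of_finiteDimensional (Matrix.mulVecLin M)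
  have hT1 : Tendsto (fun m => M.mulVec (u (φ m))) atTop (𝓝 (M.mulVec x0)) :=
    (hMcont.tendsto x0).comp hconv
  have hueq : ∀ m, M.mulVec (u m) = t m • u m - ‖x m‖⁻¹ • y := by
    intro m
    rw [hudef]
    dsimp only
    rw [Matrix.mulVec_smul, hxeq m, smul_sub, smul_smul, mul_comm, ← smul_smul]
  have htconv : Tendsto (fun m => t (φ m)) atTop (𝓝 lam1) := by
    have h6 : Tendsto t atTop (𝓝 lam1) := by
      rw [htdef]
      have h7 := tendsto_one_div_add_atTop_nhds_zero_nat (𝕜 := ℝ)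
      have h8 := (tendsto_const_nhds :
        Tendsto (fun _ : ℕ => lam1) atTop (𝓝 lam1)).add h7
      simpa using h8
    exact h6.comp hφ.tendsto_atTop
  have hresφ : Tendsto (fun m => ‖x (φ m)‖⁻¹ • y) atTop (𝓝 (0 : Fin n → ℝ)) :=
    hres.comp hφ.tendsto_atTop
  have hT2 : Tendsto (fun m => M.mulVec (u (φ m))) atTop (𝓝 (lam1 • x0 - 0)) := by
    have he : (fun m => M.mulVec (u (φ m)))
        = fun m => t (φ m) • u (φ m) - ‖x (φ m)‖⁻¹ • y := funext fun m => hueq (φ m)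
    rw [he]
    exact (htconv.smul hconv).sub hresφ
  have heig0 : M.mulVec x0 = lam1 • x0 := by
    have h9 := tendsto_nhds_unique hT1 hT2
    simpa using h9
  have hx0nn : ∀ i, 0 ≤ x0 i := by
    intro i
    have hcc : Tendsto (fun m => u (φ m) i) atTop (𝓝 (x0 i)) :=
      ((continuous_apply i).tendsto x0).comp hconv
    refine ge_of_tendsto hcc (Eventually.of_forall fun m => ?_)
    rw [hudef]
    dsimp only
    exact mul_nonneg (inv_nonneg.mpr (norm_nonneg _)) (hxnn (φ m) i)
  have hx0ne : x0 ≠ 0 := by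
    have h10 := mem_sphere_zero_iff_norm.mp hx0mem
    intro hcon
    rw [hcon] at h10
    simp at h10
  exact ⟨x0, hx0ne, hx0nn, heig0⟩
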